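/- For every x > 0: 1 − x ≤ exp(−arctan(sinh x)); moreover, for every x ∈ (0,1): exp(−arctan(sinh x)) ≤ 1 − x/2. -/

import Mathlib

open Real

private lemma hasDerivAt_gd (x : ℝ) :
    HasDerivAt (fun x : ℝ => Real.arctan (Real.sinh x)) (1 / Real.cosh x) x := by
  have h := (Real.hasDerivAt_arctan (Real.sinh x)).comp x (Real.hasDerivAt_sinh x)
  refine h.congr_deriv ?_
  have hc : Real.cosh x ≠ 0 := (Real.cosh_pos x).ne'
  rw [← Real.cosh_sq']
  field_simp

private lemma gd_le_self {x : ℝ} (hx : 0 ≤ x) : Real.arctan (Real.sinh x) ≤ x := by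
  have hmono : Monotone (fun x : ℝ => x - Real.arctan (Real.sinh x)) := by
    have hd : ∀ y : ℝ, HasDerivAt (fun x : ℝ => x - Real.arctan (Real.sinh x))
        (1 - 1 / Real.cosh y) y := fun y => (hasDerivAt_id y).sub (hasDerivAt_gd y)
    apply monotone_of_deriv_nonneg
    · exact fun y => ((hd y).differentiableAt)
    · intro y
      rw [(hd y).deriv]
      have : 1 / Real.cosh y ≤ 1 := by
        rw [div_le_one (Real.cosh_pos y)]
        exact Real.one_le_cosh y
      linarith
  have := hmono hx
  simp only [Real.sinh_zero, Real.arctan_zero, sub_zero] at this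
  linarith

private lemma hasDerivAt_g (x : ℝ) :
    HasDerivAt (fun x : ℝ => Real.exp (-Real.arctan (Real.sinh x)))
      (-(Real.exp (-Real.arctan (Real.sinh x)) / Real.cosh x)) x := by
  have h := (((hasDerivAt_gd x).neg).exp)
  refine h.congr_deriv ?_
  simp only [Pi.neg_apply]
  field_simp

theorem stmt_17 :
    (∀ x : ℝ, 0 < x → 1 - x ≤ Real.exp (-Real.arctan (Real.sinh x))) ∧
    (∀ x ∈ Set.Ioo (0 : ℝ) 1, Real.exp (-Real.arctan (Real.sinh x)) ≤ 1 - x / 2) := by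
  constructor
  · intro x hx
    have h1 := Real.add_one_le_exp (-Real.arctan (Real.sinh x))
    have h2 : Real.arctan (Real.sinh x) ≤ x := gd_le_self hx.le
    linarith
  · intro x hx
    set g : ℝ → ℝ := fun x => Real.exp (-Real.arctan (Real.sinh x)) with hg
    have hconv : ConvexOn ℝ (Set.Icc (0 : ℝ) 1) g := by
      apply MonotoneOn.convexOn_of_deriv (convex_Icc 0 1)
      · exact (Real.continuous_exp.comp
          ((Real.continuous_arctan.comp Real.continuous_sinh).neg)).continuousOn
      · exact fun y _ => ((hasDerivAt_g y).differentiableAt).differentiableWithinAt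
      · intro a ha b hb hab
        rw [interior_Icc] at ha hb
        rw [(hasDerivAt_g a).deriv, (hasDerivAt_g b).deriv, neg_le_neg_iff]
        have hca := Real.cosh_pos a
        have hcb := Real.cosh_pos b
        have hcosh : Real.cosh a ≤ Real.cosh b := by
          rcases eq_or_lt_of_le hab with h | h
          · rw [h]
          · exact le_of_lt (Real.cosh_lt_cosh.2 (by
              rw [abs_of_pos ha.1, abs_of_pos hb.1]; exact h))
        have hexp : Real.exp (-Real.arctan (Real.sinh b)) ≤
            Real.exp (-Real.arctan (Real.sinh a)) := by
          apply Real.exp_le_exp.2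
          apply neg_le_neg
          exact Real.arctan_strictMono.monotone (Real.sinh_le_sinh.2 hab)
        exact div_le_div₀ (Real.exp_pos _).le hexp hca hcosh
    have hg0 : g 0 = 1 := by simp [hg]
    have hg1 : g 1 ≤ 1 / 2 := by
      have h1 : Real.log 2 ≤ Real.arctan (Real.sinh 1) := by
        have hs : (1 : ℝ) ≤ Real.sinh 1 := (Real.self_lt_sinh_iff.2 one_pos).le
        have ha : π / 4 ≤ Real.arctan (Real.sinh 1) := by
          rw [← Real.arctan_one]
          exact Real.arctan_strictMono.monotone hs
        have hlog : Real.log 2 < π / 4 := by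
          have := Real.log_two_lt_d9
          have := Real.pi_gt_d6
          linarith
        linarith
      have : g 1 ≤ Real.exp (-Real.log 2) := by
        simp only [hg]
        exact Real.exp_le_exp.2 (neg_le_neg h1)
      calc g 1 ≤ Real.exp (-Real.log 2) := this
        _ = 1 / 2 := by
            rw [Real.exp_neg, Real.exp_log two_pos]; norm_num
    have key := hconv.2 (Set.left_mem_Icc.2 zero_le_one) (Set.right_mem_Icc.2 zero_le_one)
      (by linarith [hx.2] : (0:ℝ) ≤ 1 - x) (le_of_lt hx.1) (by ring)
    simp only [smul_eq_mul, mul_zero, mul_one, zero_add] at key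
    have : g x ≤ (1 - x) * g 0 + x * g 1 := by
      convert key using 2
    rw [hg0] at this
    nlinarith [hx.1, hg1]
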